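/- Let (E,z) be a gradient pair for H ∈ C¹(X,ℝ) on an open set X ⊆ ℝⁿ, let X̃ ⊆ ℝⁿ be open, let φ ∈ C¹(X̃,X) be a diffeomorphism, and let U : X̃ → ℝ^{n×n} be continuous and invertible at every point. Then the pair (Ẽ, z̃) defined by Ẽ(x̃) = U(x̃)ᵀ E(φ(x̃)) Dφ(x̃) and z̃(x̃) = U(x̃)^{-1} z(φ(x̃)) is a gradient pair for H̃ = H ∘ φ on X̃. -/

import Mathlib

open Matrix Set

noncomputable def grad {n : ℕ} (f : (Fin n → ℝ) → ℝ) (x : Fin n → ℝ) : Fin n → ℝ :=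
  fun i => fderiv ℝ f x (Pi.single i 1)

/-- The Jacobian matrix of a vector-valued function. -/
noncomputable def jac {n m : ℕ} (f : (Fin n → ℝ) → (Fin m → ℝ)) (x : Fin n → ℝ) :
    Matrix (Fin m) (Fin n) ℝ :=
  Matrix.of fun i j => fderiv ℝ f x (Pi.single j 1) i

/-- a gradient pair transformed by an invertible system
transformation `(φ, U)` is a gradient pair for the transformed Hamiltonian. -/
theorem transformed_gradient_pair {n : ℕ}
    (X Xt : Set (Fin n → ℝ)) (hX : IsOpen X) (hXt : IsOpen Xt)
    (H : (Fin n → ℝ) → ℝ) (hH : ContDiffOn ℝ 1 H X)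
    (E : (Fin n → ℝ) → Matrix (Fin n) (Fin n) ℝ) (z : (Fin n → ℝ) → (Fin n → ℝ))
    (hEcont : ContinuousOn E X) (hzcont : ContinuousOn z X)
    (hgradpair : ∀ x ∈ X, (E x)ᵀ.mulVec (z x) = grad H x)
    -- φ is a C¹ diffeomorphism from Xt onto X with C¹ inverse ψ
    (φ ψ : (Fin n → ℝ) → (Fin n → ℝ))
    (hφ : ContDiffOn ℝ 1 φ Xt) (hφmap : Set.MapsTo φ Xt X)
    (hψ : ContDiffOn ℝ 1 ψ X) (hψmap : Set.MapsTo ψ X Xt)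
    (hψφ : ∀ xt ∈ Xt, ψ (φ xt) = xt) (hφψ : ∀ x ∈ X, φ (ψ x) = x)
    -- U is continuous and pointwise invertible
    (U : (Fin n → ℝ) → Matrix (Fin n) (Fin n) ℝ)
    (hUcont : ContinuousOn U Xt) (hUinv : ∀ xt ∈ Xt, IsUnit (U xt).det) :
    ContinuousOn (fun xt => (U xt)ᵀ * E (φ xt) * jac φ xt) Xt ∧
    ContinuousOn (fun xt => ((U xt)⁻¹).mulVec (z (φ xt))) Xt ∧
    ∀ xt ∈ Xt,
      ((U xt)ᵀ * E (φ xt) * jac φ xt)ᵀ.mulVec (((U xt)⁻¹).mulVec (z (φ xt)))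
        = grad (H ∘ φ) xt := by
  have hφc : ContinuousOn φ Xt := hφ.continuousOn
  have hEφ : ContinuousOn (fun xt => E (φ xt)) Xt := hEcont.comp hφc hφmap
  have hzφ : ContinuousOn (fun xt => z (φ xt)) Xt := hzcont.comp hφc hφmap
  -- continuity of the Jacobian of φ
  have hfd : ContinuousOn (fderiv ℝ φ) Xt :=
    hφ.continuousOn_fderiv_of_isOpen hXt le_rfl
  have hjac : ContinuousOn (fun xt => jac φ xt) Xt := by
    apply continuousOn_pi.2
    intro i
    apply continuousOn_pi.2
    intro j
    have : ContinuousOn (fun xt => fderiv ℝ φ xt (Pi.single j 1)) Xt := by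
      have h := ((ContinuousLinearMap.apply ℝ (Fin n → ℝ) (Pi.single j (1:ℝ))).continuous).comp_continuousOn hfd
      simpa [Function.comp_def, ContinuousLinearMap.apply_apply] using h
    exact (continuous_apply i).comp_continuousOn this
  -- continuity of the inverse of U
  have hUinvC : ContinuousOn (fun xt => (U xt)⁻¹) Xt := by
    intro xt hxt
    exact ((continuousAt_matrix_inv (U xt)
      (NormedRing.inverse_continuousAt (hUinv xt hxt).unit)).comp
        (hUcont.continuousAt (hXt.mem_nhds hxt))).continuousWithinAt
  have hmulVecC : ∀ (A : (Fin n → ℝ) → Matrix (Fin n) (Fin n) ℝ)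
      (v : (Fin n → ℝ) → (Fin n → ℝ)), ContinuousOn A Xt → ContinuousOn v Xt →
      ContinuousOn (fun xt => (A xt).mulVec (v xt)) Xt := by
    intro A v hA hv
    apply continuousOn_pi.2
    intro i
    simp only [Matrix.mulVec, dotProduct]
    apply continuousOn_finset_sum
    intro j _
    exact (((continuous_apply j).comp (continuous_apply i)).comp_continuousOn hA).mul
      ((continuous_apply j).comp_continuousOn hv)
  refine ⟨?_, ?_, ?_⟩
  · -- continuity of Ẽ
    have hUT : ContinuousOn (fun xt => (U xt)ᵀ) Xt := by
      simpa [Function.comp_def] using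
        (continuous_id.matrix_transpose).comp_continuousOn hUcont
    exact (hUT.mul hEφ).mul hjac
  · exact hmulVecC _ _ hUinvC hzφ
  · intro xt hxt
    have hxX : φ xt ∈ X := hφmap hxt
    have hHd : DifferentiableAt ℝ H (φ xt) :=
      (hH.differentiableOn one_ne_zero).differentiableAt (hX.mem_nhds hxX)
    have hφd : DifferentiableAt ℝ φ xt :=
      (hφ.differentiableOn one_ne_zero).differentiableAt (hXt.mem_nhds hxt)
    have hchain : fderiv ℝ (H ∘ φ) xt = (fderiv ℝ H (φ xt)).comp (fderiv ℝ φ xt) :=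
      fderiv_comp xt hHd hφd
    -- collapse the U's
    have hUU : U xt * (U xt)⁻¹ = 1 := Matrix.mul_nonsing_inv _ (hUinv xt hxt)
    have key : ((U xt)ᵀ * E (φ xt) * jac φ xt)ᵀ.mulVec (((U xt)⁻¹).mulVec (z (φ xt)))
        = (jac φ xt)ᵀ.mulVec ((E (φ xt))ᵀ.mulVec (z (φ xt))) := by
      rw [Matrix.mulVec_mulVec]
      rw [Matrix.transpose_mul, Matrix.transpose_mul, Matrix.transpose_transpose]
      rw [Matrix.mul_assoc, Matrix.mul_assoc, hUU, Matrix.mul_one, ← Matrix.mulVec_mulVec]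
    rw [key, hgradpair _ hxX]
    funext i
    have hi : grad (H ∘ φ) xt i
        = fderiv ℝ H (φ xt) (fderiv ℝ φ xt (Pi.single i 1)) := by
      simp [grad, hchain]
    rw [hi]
    have := (fderiv ℝ H (φ xt)).toLinearMap.pi_apply_eq_sum_univ
      (fderiv ℝ φ xt (Pi.single i 1))
    simp only [ContinuousLinearMap.coe_coe] at this
    rw [this]
    simp only [Matrix.mulVec, dotProduct, Matrix.transpose_apply, jac, Matrix.of_apply,
      grad, smul_eq_mul]
    refine Finset.sum_congr rfl fun j _ => ?_
    have h1 : (fun k => if j = k then (1:ℝ) else 0) = Pi.single j 1 :=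
      funext fun k => by simp [Pi.single_apply, eq_comm]
    rw [h1]
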